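/- arXiv:1702.04737 — 3 statements merged into one kernel-verified Lean document; each statement's English description precedes it below -/
import Mathlib

section
/- Let V be a real symmetric 2n×2n matrix with V + iΩ ≻ 0, and let M be a principal square-root matrix for V. Then, as an identity of invertible complex 2n×2n matrices, (Mᵀ)^{-1} V^{-1} (V + iΩ) V^{-1} M^{-1} = (V − iΩ)^{-1}. (Equivalently, since (Mᵀ)² = I + (ΩV)^{-2}: (I + (ΩV)^{-2})^{-1/2} V^{-1} (V + iΩ) V^{-1} (I + (VΩ)^{-2})^{-1/2} = (V − iΩ)^{-1}.) -/
noncomputable section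
open Matrix
open scoped ComplexOrder

/-- The standard `2n × 2n` symplectic form matrix `Ω = [[0, I], [-I, 0]]`. -/
def Om (n : ℕ) : Matrix (Fin n ⊕ Fin n) (Fin n ⊕ Fin n) ℝ :=
  Matrix.fromBlocks 0 1 (-1) 0

/-- Complexification of a real matrix. -/
def cm {k l : Type*} (A : Matrix k l ℝ) : Matrix k l ℂ := A.map Complex.ofReal

namespace InversionAux

open Polynomial

variable {m : Type*} [Fintype m] [DecidableEq m]

lemma charpoly_eval' (A : Matrix m m ℂ) (r : ℂ) :
    A.charpoly.eval r = (r • (1 : Matrix m m ℂ) - A).det := by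
  rw [Matrix.charpoly, _root_.eval_det, matPolyEquiv_charmatrix]
  simp [smul_one_eq_diagonal]

lemma unit_of_not_root (A : Matrix m m ℂ) (r : ℂ) (h : ¬ A.charpoly.IsRoot r) :
    IsUnit (A - r • 1) := by
  rw [Matrix.isUnit_iff_isUnit_det, isUnit_iff_ne_zero]
  intro hd
  apply h
  rw [Polynomial.IsRoot, charpoly_eval' A r]
  have : r • (1 : Matrix m m ℂ) - A = -(A - r • 1) := by rw [neg_sub]
  rw [this, Matrix.det_neg, hd, mul_zero]

lemma pow_comm_trans {X W Z : Matrix m m ℂ} (h : X * Z = Z * W) (k : ℕ) :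
    X ^ k * Z = Z * W ^ k := by
  induction k with
  | zero => simp
  | succ k ih =>
      rw [pow_succ, pow_succ, Matrix.mul_assoc, ← Matrix.mul_assoc Z, ← ih,
        Matrix.mul_assoc, h, ← Matrix.mul_assoc]

lemma aeval_comm_trans {X W Z : Matrix m m ℂ} (h : X * Z = Z * W) (p : ℂ[X]) :
    (aeval X p) * Z = Z * (aeval W p) := by
  induction p using Polynomial.induction_on' with
  | add p q hp hq => rw [map_add, map_add, add_mul, mul_add, hp, hq]
  | monomial k a =>
      rw [aeval_monomial, aeval_monomial]
      simp only [Algebra.algebraMap_eq_smul_one, smul_mul_assoc, one_mul, mul_smul_comm]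
      rw [pow_comm_trans h k]

lemma aeval_isUnit (A : Matrix m m ℂ) :
    ∀ (k : ℕ) (p : ℂ[X]), p.Monic → p.natDegree = k →
      (∀ r : ℂ, p.IsRoot r → IsUnit (A - r • 1)) → IsUnit (aeval A p) := by
  intro k
  induction k with
  | zero =>
      intro p hp h0 _
      have : p = 1 := hp.natDegree_eq_zero.mp h0
      simp [this]
  | succ k ih =>
      intro p hp hdeg hroots
      have hdpos : 0 < p.degree := by
        refine Polynomial.natDegree_pos_iff_degree_pos.mp ?_
        rw [hdeg]; exact k.succ_pos
      obtain ⟨r, hr⟩ := Complex.exists_root hdpos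
      have hfac : (X - C r) * (p /ₘ (X - C r)) = p :=
        (mul_divByMonic_eq_iff_isRoot).mpr hr
      have hqmonic : (p /ₘ (X - C r)).Monic :=
        (monic_X_sub_C r).of_mul_monic_left (hfac.symm ▸ hp)
      have hqdeg : (p /ₘ (X - C r)).natDegree = k := by
        rw [natDegree_divByMonic p (monic_X_sub_C r), hdeg, natDegree_X_sub_C]
        rfl
      have hqroots : ∀ s : ℂ, (p /ₘ (X - C r)).IsRoot s → IsUnit (A - s • 1) := by
        intro s hs
        apply hroots
        rw [← hfac]
        simp [Polynomial.IsRoot, hs.eq_zero]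
      have := ih _ hqmonic hqdeg hqroots
      have h2 : IsUnit (A - r • 1) := hroots r hr
      have : IsUnit (aeval A ((X - C r) * (p /ₘ (X - C r)))) := by
        rw [_root_.map_mul]
        exact ((by simpa [Algebra.algebraMap_eq_smul_one] using h2 :
          IsUnit (aeval A (X - C r)))).mul this
      rwa [hfac] at this

lemma sylvester_zero {X W Z : Matrix m m ℂ} (h : X * Z = Z * W)
    (hdisj : ∀ r : ℂ, W.charpoly.IsRoot r → ¬ X.charpoly.IsRoot r) : Z = 0 := by
  have h1 : aeval X W.charpoly * Z = Z * aeval W W.charpoly := aeval_comm_trans h _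
  rw [Matrix.aeval_self_charpoly, mul_zero] at h1
  obtain ⟨u, hu⟩ := aeval_isUnit X W.charpoly.natDegree W.charpoly
    (Matrix.charpoly_monic W) rfl
    (fun r hr => unit_of_not_root X r (hdisj r hr))
  have : (↑u⁻¹ : Matrix m m ℂ) * ((↑u : Matrix m m ℂ) * Z) = 0 := by
    rw [hu, h1, mul_zero]
  rwa [← Matrix.mul_assoc, Units.inv_mul, Matrix.one_mul] at this

lemma comm_inv {A B : Matrix m m ℂ} (hA : IsUnit A.det) (h : B * A = A * B) :
    B * A⁻¹ = A⁻¹ * B := by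
  have h1 := Matrix.mul_nonsing_inv A hA
  have h2 := Matrix.nonsing_inv_mul A hA
  calc B * A⁻¹ = (A⁻¹ * A) * B * A⁻¹ := by rw [h2, one_mul]
    _ = A⁻¹ * (A * B) * A⁻¹ := by rw [Matrix.mul_assoc A⁻¹ A B]
    _ = A⁻¹ * (B * A) * A⁻¹ := by rw [h]
    _ = A⁻¹ * B * (A * A⁻¹) := by simp only [Matrix.mul_assoc]
    _ = A⁻¹ * B := by rw [h1, mul_one]

/-- transfer of roots through conjugation -/
lemma conj_root {A P : Matrix m m ℂ} (hP : IsUnit P.det) (r : ℂ)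
    (h : (P⁻¹ * A * P).charpoly.IsRoot r) : A.charpoly.IsRoot r := by
  rw [Polynomial.IsRoot, charpoly_eval'] at h ⊢
  have key : P⁻¹ * (r • 1 - A) * P = r • (1 : Matrix m m ℂ) - P⁻¹ * A * P := by
    rw [Matrix.mul_sub, Matrix.sub_mul, mul_smul_comm, Matrix.mul_one, smul_mul_assoc,
      Matrix.nonsing_inv_mul P hP]
  rw [← key, Matrix.det_mul, Matrix.det_mul] at h
  have hPinv : P⁻¹.det ≠ 0 := by
    have := Matrix.isUnit_nonsing_inv_det P hP
    exact this.ne_zero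
  rcases mul_eq_zero.mp h with h' | h'
  · rcases mul_eq_zero.mp h' with h'' | h''
    · exact absurd h'' hPinv
    · exact h''
  · exact absurd h' hP.ne_zero

/-- The key symmetry fact via uniqueness of the principal square root. -/
lemma key_sym (Vc Mc Oc : Matrix m m ℂ) (hVdet : IsUnit Vc.det)
    (hVT : Vcᵀ = Vc) (hOT : Ocᵀ = -Oc)
    (hM2 : Mc * Mc = 1 + (Oc * Vc⁻¹) * (Oc * Vc⁻¹))
    (hroots : ∀ μ : ℂ, Mc.charpoly.IsRoot μ → μ.im = 0 ∧ 0 < μ.re) :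
    Mc * Vc = Vc * Mcᵀ := by
  have hVV : Vc * Vc⁻¹ = 1 := Matrix.mul_nonsing_inv Vc hVdet
  have hVV' : Vc⁻¹ * Vc = 1 := Matrix.nonsing_inv_mul Vc hVdet
  have hcanc1 : ∀ x : Matrix m m ℂ, Vc * (Vc⁻¹ * x) = x := fun x => by
    rw [← Matrix.mul_assoc, hVV, one_mul]
  have hcanc2 : ∀ x : Matrix m m ℂ, Vc⁻¹ * (Vc * x) = x := fun x => by
    rw [← Matrix.mul_assoc, hVV', one_mul]
  have hMM : ∀ x : Matrix m m ℂ, Mc * (Mc * x) = x + Oc * (Vc⁻¹ * (Oc * (Vc⁻¹ * x))) := by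
    intro x
    have := congrArg (· * x) hM2
    simpa only [Matrix.add_mul, Matrix.one_mul, Matrix.mul_assoc] using this
  set Xm := Vc⁻¹ * Mc * Vc with hXm
  set Y := Mcᵀ with hY
  have hXsq : Xm * Xm = 1 + Vc⁻¹ * (Oc * (Vc⁻¹ * Oc)) := by
    rw [hXm]
    simp only [Matrix.mul_assoc, hcanc1, hcanc2, hMM, Matrix.mul_add, Matrix.mul_one,
      hVV', Matrix.mul_one]
  have hYsq : Y * Y = 1 + Vc⁻¹ * (Oc * (Vc⁻¹ * Oc)) := by
    rw [hY, ← Matrix.transpose_mul, hM2]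
    simp only [Matrix.transpose_add, Matrix.transpose_one, Matrix.transpose_mul,
      Matrix.transpose_nonsing_inv, hVT, hOT, Matrix.mul_neg, Matrix.neg_mul, neg_neg,
      Matrix.mul_assoc]
  have hsq : Xm * Xm = Y * Y := hXsq.trans hYsq.symm
  have hcomm : Xm * (Xm - Y) = (Xm - Y) * (-Y) := by
    rw [Matrix.mul_sub, Matrix.sub_mul, hsq]
    noncomm_ring
  -- disjoint spectra
  have hXroot : ∀ r : ℂ, Xm.charpoly.IsRoot r → Mc.charpoly.IsRoot r := by
    intro r hr
    exact conj_root hVdet r (by rwa [hXm] at hr)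
  have hYroot : ∀ r : ℂ, Y.charpoly.IsRoot r → Mc.charpoly.IsRoot r := by
    intro r hr
    rw [Polynomial.IsRoot, charpoly_eval'] at hr ⊢
    have : r • (1 : Matrix m m ℂ) - Y = (r • 1 - Mc)ᵀ := by
      rw [hY, Matrix.transpose_sub, Matrix.transpose_smul, Matrix.transpose_one]
    rw [this, Matrix.det_transpose] at hr
    exact hr
  have hnegYroot : ∀ r : ℂ, (-Y).charpoly.IsRoot r → Y.charpoly.IsRoot (-r) := by
    intro r hr
    rw [Polynomial.IsRoot, charpoly_eval'] at hr ⊢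
    have : (-r) • (1 : Matrix m m ℂ) - Y = -(r • 1 - -Y) := by
      rw [neg_smul]; abel
    rw [this, Matrix.det_neg, hr, mul_zero]
  have hdisj : ∀ r : ℂ, (-Y).charpoly.IsRoot r → ¬ Xm.charpoly.IsRoot r := by
    intro r h1 h2
    have hneg := hroots (-r) (hYroot _ (hnegYroot r h1))
    have hpos := hroots r (hXroot r h2)
    have := hneg.2
    rw [Complex.neg_re] at this
    linarith [hpos.2]
  have hZ : Xm - Y = 0 := sylvester_zero hcomm hdisj
  have hXY : Xm = Y := sub_eq_zero.mp hZ
  have hfin : Vc * Xm = Mc * Vc := by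
    rw [hXm, ← Matrix.mul_assoc, ← Matrix.mul_assoc, hVV, one_mul]
  rw [← hfin, hXY, hY]

end InversionAux

open InversionAux

lemma cm_neg {k : Type*} (A : Matrix k k ℝ) : cm (-A) = -(cm A) := by
  ext i j; simp [cm]

lemma cm_mul {k : Type*} [Fintype k] (A B : Matrix k k ℝ) : cm (A * B) = cm A * cm B := by
  ext i j
  simp [cm, Matrix.mul_apply]

lemma cm_one {k : Type*} [Fintype k] [DecidableEq k] : cm (1 : Matrix k k ℝ) = 1 := by
  ext i j
  by_cases h : i = j <;> simp [cm, Matrix.one_apply, h]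

lemma cm_add {k : Type*} (A B : Matrix k k ℝ) : cm (A + B) = cm A + cm B := by
  ext i j; simp [cm]

lemma cm_transpose {k : Type*} (A : Matrix k k ℝ) : cm Aᵀ = (cm A)ᵀ := by
  ext i j; simp [cm]

lemma cm_det {k : Type*} [Fintype k] [DecidableEq k] (A : Matrix k k ℝ) :
    (cm A).det = (A.det : ℂ) :=
  (RingHom.map_det Complex.ofRealHom A).symm

lemma Om_mul_Om (n : ℕ) : Om n * Om n = -1 := by
  have h1 : -(1 : Matrix (Fin n ⊕ Fin n) (Fin n ⊕ Fin n) ℝ) =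
      Matrix.fromBlocks (-1) (-0) (-0) (-1) := by
    rw [← Matrix.fromBlocks_neg, Matrix.fromBlocks_one]
  rw [Om, Matrix.fromBlocks_multiply, h1]
  norm_num

lemma Om_transpose (n : ℕ) : (Om n)ᵀ = -(Om n) := by
  rw [Om, Matrix.fromBlocks_transpose]
  simp [Matrix.fromBlocks_neg]

/-- For a real symmetric `V` with `V + iΩ ≻ 0` and `M` a principal square-root matrix for `V`
(`M` real, `M² = I + (VΩ)⁻²`, `M` commutes with `VΩ`, all complex eigenvalues of `M` positive
real), one has `(Mᵀ)⁻¹ V⁻¹ (V + iΩ) V⁻¹ M⁻¹ = (V - iΩ)⁻¹` as complex matrices. -/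
theorem inversion_identity (n : ℕ)
    (V M : Matrix (Fin n ⊕ Fin n) (Fin n ⊕ Fin n) ℝ)
    (hV : V.IsSymm)
    (hVpd : (cm V + Complex.I • cm (Om n)).PosDef)
    (hM2 : M * M = 1 + ((V * Om n)⁻¹) ^ 2)
    (hMcomm : M * (V * Om n) = (V * Om n) * M)
    (hMeig : ∀ μ : ℂ, (cm M).charpoly.IsRoot μ → μ.im = 0 ∧ 0 < μ.re) :
    ((cm M)ᵀ)⁻¹ * (cm V)⁻¹ * (cm V + Complex.I • cm (Om n)) * (cm V)⁻¹ * (cm M)⁻¹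
      = (cm V - Complex.I • cm (Om n))⁻¹ := by
  classical
  set Vc := cm V with hVcdef
  set Mc := cm M with hMcdef
  set Oc := cm (Om n) with hOcdef
  -- basic transposes
  have hVT : Vcᵀ = Vc := by rw [hVcdef, ← cm_transpose, hV.eq]
  have hOT : Ocᵀ = -Oc := by
    rw [hOcdef, ← cm_transpose, Om_transpose, cm_neg]
  have hOO : Oc * Oc = -1 := by
    rw [hOcdef, ← cm_mul, Om_mul_Om, cm_neg, cm_one]
  -- positive definiteness facts
  have hAtB : (Vc + Complex.I • Oc)ᵀ = Vc - Complex.I • Oc := by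
    rw [Matrix.transpose_add, Matrix.transpose_smul, hVT, hOT, smul_neg]
    abel
  have hBpd : (Vc - Complex.I • Oc).PosDef := hAtB ▸ hVpd.transpose
  have hAdet : IsUnit (Vc + Complex.I • Oc).det :=
    (Matrix.isUnit_iff_isUnit_det _).mp hVpd.isUnit
  have hBdet : IsUnit (Vc - Complex.I • Oc).det :=
    (Matrix.isUnit_iff_isUnit_det _).mp hBpd.isUnit
  have hVdet : IsUnit Vc.det := by
    have hsum : ((Vc + Complex.I • Oc) + (Vc - Complex.I • Oc)).PosDef := hVpd.add hBpd
    have h2V : (Vc + Complex.I • Oc) + (Vc - Complex.I • Oc) = (2 : ℂ) • Vc := by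
      rw [two_smul]; abel
    have := (Matrix.isUnit_iff_isUnit_det _).mp hsum.isUnit
    rw [h2V, Matrix.det_smul] at this
    exact (isUnit_of_mul_isUnit_right this)
  -- Oc determinant
  have hOdet : IsUnit Oc.det := by
    have : Oc.det * Oc.det = (-1 : Matrix (Fin n ⊕ Fin n) (Fin n ⊕ Fin n) ℂ).det := by
      rw [← Matrix.det_mul, hOO]
    have hd1 : ((-1 : Matrix (Fin n ⊕ Fin n) (Fin n ⊕ Fin n) ℂ)).det
        = (-1 : ℂ) ^ (Fintype.card (Fin n ⊕ Fin n)) := by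
      have : (-1 : Matrix (Fin n ⊕ Fin n) (Fin n ⊕ Fin n) ℂ) = -(1 : Matrix _ _ ℂ) := rfl
      rw [this, Matrix.det_neg, Matrix.det_one, mul_one]
    rw [isUnit_iff_ne_zero]
    intro h
    rw [h, mul_zero, hd1] at this
    exact (pow_ne_zero _ (by norm_num : (-1 : ℂ) ≠ 0)) this.symm
  -- invertibility of Mc
  have hM0 : ¬ Mc.charpoly.IsRoot 0 := fun h => by simpa using (hMeig 0 h).2
  have hMdet : IsUnit Mc.det := by
    rw [isUnit_iff_ne_zero]
    intro h
    apply hM0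
    rw [Polynomial.IsRoot, charpoly_eval' Mc 0]
    rw [zero_smul, zero_sub, Matrix.det_neg, h, mul_zero]
  have hVOdetC : IsUnit (Vc * Oc).det := by rw [Matrix.det_mul]; exact hVdet.mul hOdet
  have hcmVO : cm (V * Om n) = Vc * Oc := cm_mul V (Om n)
  have hVOdetR : IsUnit (V * Om n).det := by
    rw [isUnit_iff_ne_zero]
    intro h
    have hz : (Vc * Oc).det = 0 := by
      rw [← hcmVO, cm_det, h, Complex.ofReal_zero]
    exact hVOdetC.ne_zero hz
  have hVOinvC : cm ((V * Om n)⁻¹) = (Vc * Oc)⁻¹ := by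
    refine (Matrix.inv_eq_right_inv ?_).symm
    rw [← hcmVO, ← cm_mul, Matrix.mul_nonsing_inv _ hVOdetR, cm_one]
  -- complexified hypotheses
  rw [pow_two] at hM2
  have hM2c : Mc * Mc = 1 + (Vc * Oc)⁻¹ * (Vc * Oc)⁻¹ := by
    have h := congrArg cm hM2
    simp only [cm_mul, cm_add, cm_one, hVOinvC] at h
    exact h
  have hMcommc : Mc * (Vc * Oc) = (Vc * Oc) * Mc := by
    have h := congrArg cm hMcomm
    simp only [cm_mul] at h
    exact h
  -- J = Oc * Vc⁻¹
  have hOinv : Oc⁻¹ = -Oc := Matrix.inv_eq_right_inv (by rw [Matrix.mul_neg, hOO, neg_neg])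
  have hVOinv : (Vc * Oc)⁻¹ = -(Oc * Vc⁻¹) := by
    rw [Matrix.mul_inv_rev, hOinv, Matrix.neg_mul]
  have hM2J : Mc * Mc = 1 + (Oc * Vc⁻¹) * (Oc * Vc⁻¹) := by
    rw [hM2c, hVOinv, Matrix.neg_mul, Matrix.mul_neg, neg_neg]
  -- key symmetry
  have hK : Mc * Vc = Vc * Mcᵀ := key_sym Vc Mc Oc hVdet hVT hOT hM2J hMeig
  -- commutation facts
  have hMVO : Mc * (Vc * Oc)⁻¹ = (Vc * Oc)⁻¹ * Mc := comm_inv hVOdetC hMcommc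
  have hMJ : Mc * (Oc * Vc⁻¹) = (Oc * Vc⁻¹) * Mc := by
    have h := hMVO
    rw [hVOinv, Matrix.mul_neg, Matrix.neg_mul] at h
    exact neg_inj.mp h
  have hMinvJ : Mc⁻¹ * (Oc * Vc⁻¹) = (Oc * Vc⁻¹) * Mc⁻¹ :=
    (comm_inv hMdet hMJ.symm).symm
  -- inverse cancellations
  have hVV : Vc * Vc⁻¹ = 1 := Matrix.mul_nonsing_inv _ hVdet
  have hVV' : Vc⁻¹ * Vc = 1 := Matrix.nonsing_inv_mul _ hVdet
  have hMM' : Mc * Mc⁻¹ = 1 := Matrix.mul_nonsing_inv _ hMdet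
  have hM'M : Mc⁻¹ * Mc = 1 := Matrix.nonsing_inv_mul _ hMdet
  have hc1 : ∀ x : Matrix (Fin n ⊕ Fin n) (Fin n ⊕ Fin n) ℂ, Vc * (Vc⁻¹ * x) = x :=
    fun x => by rw [← Matrix.mul_assoc, hVV, one_mul]
  have hc3 : ∀ x : Matrix (Fin n ⊕ Fin n) (Fin n ⊕ Fin n) ℂ, Mc * (Mc⁻¹ * x) = x :=
    fun x => by rw [← Matrix.mul_assoc, hMM', one_mul]
  -- (Mcᵀ)⁻¹
  have hMT : Vc⁻¹ * (Mc * Vc) = Mcᵀ := by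
    rw [hK, ← Matrix.mul_assoc, hVV', one_mul]
  have hMTinv : (Mcᵀ)⁻¹ = Vc⁻¹ * (Mc⁻¹ * Vc) := by
    refine Matrix.inv_eq_right_inv ?_
    rw [← hMT]
    simp only [Matrix.mul_assoc, hc1, hc3, hVV']
  -- final computation
  set J := Oc * Vc⁻¹ with hJ
  set P := (1 : Matrix (Fin n ⊕ Fin n) (Fin n ⊕ Fin n) ℂ) + Complex.I • J with hPdef
  set Q := (1 : Matrix (Fin n ⊕ Fin n) (Fin n ⊕ Fin n) ℂ) - Complex.I • J with hQdef
  have e12 : (Vc + Complex.I • Oc) * (Vc⁻¹ * Mc⁻¹) = Mc⁻¹ * P := by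
    rw [Matrix.add_mul, smul_mul_assoc, ← Matrix.mul_assoc Vc Vc⁻¹ Mc⁻¹, hVV, one_mul,
      ← Matrix.mul_assoc Oc Vc⁻¹ Mc⁻¹, ← hJ, ← hMinvJ, hPdef, Matrix.mul_add, Matrix.mul_one,
      mul_smul_comm]
  have e3 : (Vc - Complex.I • Oc) * Vc⁻¹ = Q := by
    rw [Matrix.sub_mul, hVV, smul_mul_assoc, ← hJ, hQdef]
  have hss : (Complex.I • J) * (Complex.I • J) = -(J * J) := by
    rw [smul_mul_assoc, mul_smul_comm, smul_smul, Complex.I_mul_I, neg_one_smul]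
  have e4 : Q * P = Mc * Mc := by
    rw [hQdef, hPdef, Matrix.sub_mul, Matrix.one_mul, Matrix.mul_add, Matrix.mul_one, hss,
      hM2J]
    abel
  have hMP : Mc⁻¹ * P = P * Mc⁻¹ := by
    rw [hPdef, Matrix.mul_add, Matrix.add_mul, Matrix.mul_one, Matrix.one_mul,
      mul_smul_comm, smul_mul_assoc, hMinvJ]
  have hMPx : ∀ x : Matrix (Fin n ⊕ Fin n) (Fin n ⊕ Fin n) ℂ,
      Mc⁻¹ * (P * x) = P * (Mc⁻¹ * x) := fun x => by
    rw [← Matrix.mul_assoc, hMP, Matrix.mul_assoc]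
  refine (Matrix.inv_eq_right_inv ?_).symm
  rw [hMTinv]
  simp only [Matrix.mul_assoc, hc1]
  rw [e12, hMP, hMPx, ← Matrix.mul_assoc (Vc - Complex.I • Oc) Vc⁻¹, e3,
    ← Matrix.mul_assoc Q P, e4]
  simp only [Matrix.mul_assoc, hc3, hMM']
end
end

section
/- Let A be a Hermitian positive definite N×N complex matrix and let X be an M×N complex matrix of rank M (M ≤ N). Then X A X* is Hermitian positive definite (in particular invertible), and the Hermitian matrix A^{-1} − X* (X A X*)^{-1} X is positive semidefinite, where X* denotes the conjugate transpose. -/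
noncomputable section
open Matrix
open scoped ComplexOrder

/-- For a Hermitian positive definite `N × N` complex matrix `A` and an `M × N` complex matrix
`X` of rank `M` (with `M ≤ N`), the matrix `X A X*` is Hermitian positive definite, and
`A⁻¹ - X* (X A X*)⁻¹ X` is positive semidefinite. -/
theorem inv_sub_conjTranspose_sandwich_posSemidef (N M : ℕ) (hMN : M ≤ N)
    (A : Matrix (Fin N) (Fin N) ℂ) (hA : A.PosDef)
    (X : Matrix (Fin M) (Fin N) ℂ) (hX : X.rank = M) :
    (X * A * Xᴴ).PosDef ∧ (A⁻¹ - Xᴴ * (X * A * Xᴴ)⁻¹ * X).PosSemidef := by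
  -- rows of X are linearly independent
  have hli : LinearIndependent ℂ (fun i => X i) :=
    linearIndependent_iff_card_eq_finrank_span.mpr <| by
      rw [Set.finrank, show (Set.range fun i => X i) = Set.range X.row from rfl, ← rank_eq_finrank_span_row, hX, Fintype.card_fin]
  have hinj : Function.Injective X.vecMul := Matrix.vecMul_injective_iff.mpr hli
  -- X A Xᴴ is positive definite
  have hS : (X * A * Xᴴ).PosDef := by
    refine Matrix.PosDef.of_dotProduct_mulVec_pos ?_ ?_
    · have hAh : Aᴴ = A := hA.1
      simp [Matrix.IsHermitian, conjTranspose_mul, hAh, Matrix.mul_assoc]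
    · intro x hx
      have hy : Xᴴ *ᵥ x ≠ 0 := by
        intro h
        apply hx
        have h2 : star x ᵥ* X = (0 : Fin M → ℂ) ᵥ* X := by
          have := congrArg star h
          rw [Matrix.star_mulVec, conjTranspose_conjTranspose] at this
          simpa using this
        simpa using congrArg star (hinj h2)
      have := hA.dotProduct_mulVec_pos hy
      simpa [Matrix.star_mulVec, Matrix.mul_assoc, Matrix.dotProduct_mulVec,
        Matrix.vecMul_vecMul] using this
  refine ⟨hS, ?_⟩
  haveI : Invertible A := hA.isUnit.invertible
  haveI : Invertible (X * A * Xᴴ) := hS.isUnit.invertible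
  -- the block matrix [[XAXᴴ, X],[Xᴴ, A⁻¹]] is positive semidefinite
  have hblock : (fromBlocks (X * A * Xᴴ) X Xᴴ A⁻¹).PosSemidef := by
    have key : fromBlocks (X * A * Xᴴ) X Xᴴ A⁻¹
        = (fromRows X A⁻¹) * A * (fromRows X A⁻¹)ᴴ := by
      rw [conjTranspose_fromRows_eq_fromCols_conjTranspose, Matrix.mul_assoc,
        fromRows_mul, fromRows_mul_fromCols]
      have h1 : A⁻¹ᴴ = A⁻¹ := by
        rw [conjTranspose_nonsing_inv, hA.1]
      rw [h1]
      have e1 : X * A * A⁻¹ = X := by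
        rw [Matrix.mul_assoc, Matrix.mul_inv_of_invertible, Matrix.mul_one]
      have e2 : A⁻¹ * A * Xᴴ = Xᴴ := by
        rw [Matrix.inv_mul_of_invertible, Matrix.one_mul]
      have e3 : A⁻¹ * A * A⁻¹ = A⁻¹ := by
        rw [Matrix.inv_mul_of_invertible, Matrix.one_mul]
      rw [e1, e2, e3, ← Matrix.mul_assoc]
    rw [key]
    exact hA.posSemidef.mul_mul_conjTranspose_same _
  exact (Matrix.PosDef.fromBlocks₁₁ X A⁻¹ hS).mp hblock
end
end

section
/- Let V be a real symmetric 2n×2n matrix with V + iΩ ≻ 0. Then there exists a real 2n×2n matrix M such that M² = I + (VΩ)^{-2}, M commutes with VΩ, and every complex eigenvalue of M is a positive real number (i.e., a principal square-root matrix for V exists). -/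
noncomputable section
open Matrix
open scoped ComplexOrder

set_option linter.unusedSectionVars false

namespace Matrix.PosSemidef

open scoped MatrixOrder

variable {k : Type*} [Fintype k] [DecidableEq k]

/-- square root of a real positive semidefinite matrix -/
def sqrt {A : Matrix k k ℝ} (_ : A.PosSemidef) : Matrix k k ℝ := CFC.sqrt A

lemma sqrt_mul_self {A : Matrix k k ℝ} (hA : A.PosSemidef) : hA.sqrt * hA.sqrt = A :=
  CFC.sqrt_mul_sqrt_self A hA.nonneg

lemma posSemidef_sqrt {A : Matrix k k ℝ} (hA : A.PosSemidef) : hA.sqrt.PosSemidef :=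
  (CFC.sqrt_nonneg A).posSemidef

lemma eq_sqrt_of_sq_eq {A : Matrix k k ℝ} (hA : A.PosSemidef) {B : Matrix k k ℝ}
    (hB : B.PosSemidef) (hAB : A ^ 2 = B) : A = hB.sqrt :=
  (CFC.sqrt_unique (by rw [← pow_two]; exact hAB) hA.nonneg).symm

end Matrix.PosSemidef

namespace PSA

variable {k : Type*} [Fintype k] [DecidableEq k]

/-- Complexification of a real vector. -/
def cv (x : k → ℝ) : k → ℂ := fun i => (x i : ℂ)

lemma cv_dot (u w : k → ℝ) : cv u ⬝ᵥ cv w = ((u ⬝ᵥ w : ℝ) : ℂ) := by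
  simp [cv, dotProduct]

lemma star_cv (x : k → ℝ) : star (cv x) = cv x := by
  funext i; simp [cv]

lemma cv_zero : cv (0 : k → ℝ) = 0 := by
  funext i; simp [cv]

lemma cv_eq_zero {x : k → ℝ} (h : cv x = 0) : x = 0 := by
  funext i
  have := congrFun h i
  simpa [cv] using this

lemma cm_mulVec (A : Matrix k k ℝ) (x : k → ℝ) : cm A *ᵥ cv x = cv (A *ᵥ x) := by
  funext i; simp [cm, cv, mulVec, dotProduct]

lemma cm_mul (A B : Matrix k k ℝ) : cm (A * B) = cm A * cm B := by
  ext i j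
  simp [cm, Matrix.mul_apply]

lemma cm_one : cm (1 : Matrix k k ℝ) = 1 := by
  simp [cm]

lemma cm_add (A B : Matrix k k ℝ) : cm (A + B) = cm A + cm B := by
  ext i j; simp [cm]

lemma cm_conjTranspose (A : Matrix k k ℝ) : (cm A)ᴴ = cm Aᵀ := by
  ext i j; simp [cm]

lemma vecMul_eq (W : Matrix k k ℝ) (x : k → ℝ) : x ᵥ* W = Wᵀ *ᵥ x :=
  (Matrix.mulVec_transpose W x).symm

lemma skew_quad {W : Matrix k k ℝ} (hW : Wᵀ = -W) (x : k → ℝ) : x ⬝ᵥ W *ᵥ x = 0 := by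
  have h1 : x ⬝ᵥ W *ᵥ x = -(x ⬝ᵥ W *ᵥ x) := by
    conv_lhs => rw [dotProduct_mulVec, vecMul_eq, hW, neg_mulVec, neg_dotProduct,
      dotProduct_comm]
  linarith

lemma skew_cross {W : Matrix k k ℝ} (hW : Wᵀ = -W) (x y : k → ℝ) :
    x ⬝ᵥ W *ᵥ y = -((W *ᵥ x) ⬝ᵥ y) := by
  rw [dotProduct_mulVec, vecMul_eq, hW, neg_mulVec, neg_dotProduct]

lemma symm_cross {A : Matrix k k ℝ} (hA : Aᵀ = A) (x y : k → ℝ) :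
    x ⬝ᵥ A *ᵥ y = y ⬝ᵥ A *ᵥ x := by
  rw [dotProduct_mulVec, vecMul_eq, hA, dotProduct_comm]

/-- real positive definite implies complexification positive definite -/
lemma cm_posDef {A : Matrix k k ℝ} (hA : A.PosDef) : (cm A).PosDef := by
  have hAt : Aᵀ = A := hA.1
  refine Matrix.PosDef.of_dotProduct_mulVec_pos ?_ ?_
  · show (cm A)ᴴ = cm A
    rw [cm_conjTranspose, hAt]
  · intro z hz
    set u : k → ℝ := fun i => (z i).re with hu
    set v : k → ℝ := fun i => (z i).im with hv
    have hzuv : z = cv u + Complex.I • cv v := by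
      funext i
      simp only [cv, Pi.add_apply, Pi.smul_apply, smul_eq_mul, hu, hv]
      rw [mul_comm]
      exact (Complex.re_add_im (z i)).symm
    have key : star z ⬝ᵥ cm A *ᵥ z = ((u ⬝ᵥ A *ᵥ u + v ⬝ᵥ A *ᵥ v : ℝ) : ℂ) := by
      rw [hzuv]
      simp only [star_add, star_smul, star_cv, Complex.star_def, Complex.conj_I,
        mulVec_add, mulVec_smul, cm_mulVec, dotProduct_add, add_dotProduct,
        neg_smul, neg_dotProduct, dotProduct_smul, smul_dotProduct, smul_eq_mul, cv_dot]
      rw [symm_cross hAt v u]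
      push_cast
      ring_nf
      rw [Complex.I_sq]
      ring
    rw [key, Complex.zero_lt_real]
    have hpsd := hA.posSemidef
    rcases eq_or_ne u 0 with h0 | h0
    · have hv0 : v ≠ 0 := by
        intro hv0
        apply hz
        rw [hzuv, h0, hv0, cv_zero]
        simp
      have h1 : 0 < v ⬝ᵥ A *ᵥ v := by simpa using hA.dotProduct_mulVec_pos hv0
      have h2 : 0 ≤ u ⬝ᵥ A *ᵥ u := by simpa using hpsd.dotProduct_mulVec_nonneg u
      linarith
    · have h1 : 0 < u ⬝ᵥ A *ᵥ u := by simpa using hA.dotProduct_mulVec_pos h0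
      have h2 : 0 ≤ v ⬝ᵥ A *ᵥ v := by simpa using hpsd.dotProduct_mulVec_nonneg v
      linarith

lemma exists_eigenvector {A : Matrix k k ℂ} {μ : ℂ} (h : A.charpoly.IsRoot μ) :
    ∃ v, v ≠ 0 ∧ A *ᵥ v = μ • v := by
  have hdet : (μ • (1 : Matrix k k ℂ) - A).det = 0 := by
    have h2 : (charmatrix A).map ⇑(Polynomial.evalRingHom μ) = μ • 1 - A := by
      ext i j
      rcases eq_or_ne i j with rfl | hij
      · simp [charmatrix_apply]
      · simp [charmatrix_apply, hij, Matrix.one_apply_ne hij,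
          Matrix.diagonal_apply_ne _ hij]
    have h3 := RingHom.map_det (Polynomial.evalRingHom μ) (charmatrix A)
    rw [RingHom.mapMatrix_apply, h2] at h3
    rw [← h3]
    simpa [Matrix.charpoly] using h
  obtain ⟨v, hv, hmul⟩ := (Matrix.exists_mulVec_eq_zero_iff).mpr hdet
  refine ⟨v, hv, ?_⟩
  have h4 : μ • v - A *ᵥ v = 0 := by
    simpa [sub_mulVec, smul_mulVec, one_mulVec] using hmul
  exact (sub_eq_zero.mp h4).symm

end PSA


set_option maxHeartbeats 2000000 in
/-- If `V` is real symmetric with `V + iΩ ≻ 0`, then a principal square-root matrix for `V`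
exists: a real matrix `M` with `M² = I + (VΩ)⁻²`, commuting with `VΩ`, and all of whose complex
eigenvalues are positive reals. -/
theorem principal_sqrt_exists (n : ℕ)
    (V : Matrix (Fin n ⊕ Fin n) (Fin n ⊕ Fin n) ℝ)
    (hV : V.IsSymm)
    (hVpd : (cm V + Complex.I • cm (Om n)).PosDef) :
    ∃ M : Matrix (Fin n ⊕ Fin n) (Fin n ⊕ Fin n) ℝ,
      M * M = 1 + ((V * Om n)⁻¹) ^ 2
        ∧ M * (V * Om n) = (V * Om n) * M
        ∧ ∀ μ : ℂ, (cm M).charpoly.IsRoot μ → μ.im = 0 ∧ 0 < μ.re := by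
  classical
  have hΩt : (Om n)ᵀ = -(Om n) := by
    ext (i | i) (j | j) <;> simp [Om, fromBlocks, Matrix.one_apply, eq_comm]
  have hΩ2 : Om n * Om n = -1 := by
    rw [Om, fromBlocks_multiply]
    ext (i | i) (j | j) <;> simp [fromBlocks, Matrix.one_apply]
  have hVt : Vᵀ = V := hV
  -- V is positive definite over ℝ
  have hVpdR : V.PosDef := by
    refine Matrix.PosDef.of_dotProduct_mulVec_pos ?_ ?_
    · show Vᴴ = V
      rw [conjTranspose_eq_transpose_of_trivial, hVt]
    · intro x hx
      have hz : PSA.cv x ≠ 0 := fun h => hx (PSA.cv_eq_zero h)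
      have h0 := hVpd.dotProduct_mulVec_pos hz
      have key : star (PSA.cv x) ⬝ᵥ ((cm V + Complex.I • cm (Om n)) *ᵥ PSA.cv x)
          = ((x ⬝ᵥ V *ᵥ x : ℝ) : ℂ) := by
        rw [PSA.star_cv, add_mulVec, smul_mulVec, dotProduct_add, dotProduct_smul,
          PSA.cm_mulVec, PSA.cm_mulVec, PSA.cv_dot, PSA.cv_dot, PSA.skew_quad hΩt]
        simp
      rw [key, Complex.zero_lt_real] at h0
      simpa using h0
  have hS := hVpdR.posSemidef
  set S := hS.sqrt with hSdef
  have hSS : S * S = V := hS.sqrt_mul_self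
  have hSsym : Sᵀ = S := by
    rw [← conjTranspose_eq_transpose_of_trivial]; exact hS.posSemidef_sqrt.1
  have hdetS : IsUnit S.det := by
    rw [isUnit_iff_ne_zero]
    intro h0
    have : V.det = 0 := by rw [← hSS, det_mul, h0, mul_zero]
    exact hVpdR.det_pos.ne' this
  have hS1 : S * S⁻¹ = 1 := mul_nonsing_inv S hdetS
  have hS2 : S⁻¹ * S = 1 := nonsing_inv_mul S hdetS
  have hSc1 : ∀ X : Matrix (Fin n ⊕ Fin n) (Fin n ⊕ Fin n) ℝ, S * (S⁻¹ * X) = X :=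
    fun X => by rw [← Matrix.mul_assoc, hS1, Matrix.one_mul]
  have hSc2 : ∀ X : Matrix (Fin n ⊕ Fin n) (Fin n ⊕ Fin n) ℝ, S⁻¹ * (S * X) = X :=
    fun X => by rw [← Matrix.mul_assoc, hS2, Matrix.one_mul]
  have hSit : (S⁻¹)ᵀ = S⁻¹ := by rw [transpose_nonsing_inv, hSsym]
  set T := S⁻¹ * Om n * S⁻¹ with hTdef
  have hTt : Tᵀ = -T := by
    rw [hTdef]
    simp only [transpose_mul, hSit, hΩt, Matrix.neg_mul, Matrix.mul_neg, Matrix.mul_assoc]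
  have hSTS : S * T * S = Om n := by
    rw [hTdef]
    have h : S * (S⁻¹ * Om n * S⁻¹) * S = S * S⁻¹ * Om n * (S⁻¹ * S) := by
      simp only [Matrix.mul_assoc]
    rw [h, hS1, hS2, Matrix.one_mul, Matrix.mul_one]
  set N : Matrix (Fin n ⊕ Fin n) (Fin n ⊕ Fin n) ℂ := 1 + Complex.I • cm T with hNdef
  have hconj : cm V + Complex.I • cm (Om n) = cm S * N * cm S := by
    have h1 : cm S * (1 : Matrix (Fin n ⊕ Fin n) (Fin n ⊕ Fin n) ℂ) * cm S = cm V := by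
      rw [Matrix.mul_one, ← PSA.cm_mul, hSS]
    have h2 : cm S * (Complex.I • cm T) * cm S = Complex.I • cm (Om n) := by
      rw [Matrix.mul_smul, Matrix.smul_mul]
      congr 1
      rw [← PSA.cm_mul, ← PSA.cm_mul, hSTS]
    rw [hNdef, Matrix.mul_add, Matrix.add_mul, h1, h2]
  have hcmS1 : cm S * cm S⁻¹ = 1 := by rw [← PSA.cm_mul, hS1, PSA.cm_one]
  have hcmS2 : cm S⁻¹ * cm S = 1 := by rw [← PSA.cm_mul, hS2, PSA.cm_one]
  have hNeq : N = (cm S⁻¹)ᴴ * (cm V + Complex.I • cm (Om n)) * cm S⁻¹ := by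
    rw [hconj, PSA.cm_conjTranspose, hSit]
    have h : cm S⁻¹ * (cm S * N * cm S) * cm S⁻¹
        = (cm S⁻¹ * cm S) * N * (cm S * cm S⁻¹) := by
      simp only [Matrix.mul_assoc]
    rw [h, hcmS1, hcmS2, Matrix.one_mul, Matrix.mul_one]
  have hNpd : N.PosDef := by
    rw [hNeq]
    refine Matrix.PosDef.of_dotProduct_mulVec_pos ?_ ?_
    · exact Matrix.isHermitian_conjTranspose_mul_mul _ hVpd.1
    · intro z hz
      have hw : cm S⁻¹ *ᵥ z ≠ 0 := by
        intro h0
        apply hz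
        have h1 : (cm S * cm S⁻¹) *ᵥ z = z := by rw [hcmS1, one_mulVec]
        rw [← h1, ← mulVec_mulVec, h0, mulVec_zero]
      have hp := hVpd.dotProduct_mulVec_pos hw
      simpa only [star_mulVec, dotProduct_mulVec, vecMul_vecMul] using hp
  set C := 1 + T * T with hCdef
  have hCpd : C.PosDef := by
    refine Matrix.PosDef.of_dotProduct_mulVec_pos ?_ ?_
    · show Cᴴ = C
      rw [conjTranspose_eq_transpose_of_trivial, hCdef, transpose_add, transpose_one,
        transpose_mul, hTt]
      simp [Matrix.neg_mul, Matrix.mul_neg]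
    · intro x hx
      have hx' : x ≠ 0 := by simpa using hx
      have hzne : (PSA.cv (T *ᵥ x) + Complex.I • PSA.cv x : (Fin n ⊕ Fin n) → ℂ) ≠ 0 := by
        intro h0
        apply hx'
        funext i
        have h1 := congrFun h0 i
        simp only [Pi.add_apply, Pi.smul_apply, PSA.cv, smul_eq_mul, Pi.zero_apply] at h1
        have him := congrArg Complex.im h1
        simpa using him
      have hpos := hNpd.dotProduct_mulVec_pos hzne
      have hyx : (T *ᵥ x) ⬝ᵥ x = 0 := by rw [dotProduct_comm]; exact PSA.skew_quad hTt x
      have hyw : (T *ᵥ x) ⬝ᵥ (T *ᵥ (T *ᵥ x)) = 0 := PSA.skew_quad hTt (T *ᵥ x)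
      have hxw : x ⬝ᵥ (T *ᵥ (T *ᵥ x)) = -((T *ᵥ x) ⬝ᵥ (T *ᵥ x)) :=
        PSA.skew_cross hTt x (T *ᵥ x)
      have key : star (PSA.cv (T *ᵥ x) + Complex.I • PSA.cv x) ⬝ᵥ
          (N *ᵥ (PSA.cv (T *ᵥ x) + Complex.I • PSA.cv x))
          = ((x ⬝ᵥ x - (T *ᵥ x) ⬝ᵥ (T *ᵥ x) : ℝ) : ℂ) := by
        rw [hNdef]
        simp only [star_add, star_smul, PSA.star_cv, Complex.star_def, Complex.conj_I,
          add_mulVec, one_mulVec, mulVec_add, mulVec_smul, smul_mulVec, PSA.cm_mulVec,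
          dotProduct_add, add_dotProduct, neg_smul, neg_dotProduct, dotProduct_smul,
          smul_dotProduct, smul_eq_mul, PSA.cv_dot]
        rw [hyx, hyw, hxw, dotProduct_comm x (T *ᵥ x), hyx]
        push_cast
        ring_nf
        rw [Complex.I_sq]
        ring
      rw [key, Complex.zero_lt_real] at hpos
      have hgoal : x ⬝ᵥ C *ᵥ x = x ⬝ᵥ x - (T *ᵥ x) ⬝ᵥ (T *ᵥ x) := by
        rw [hCdef, add_mulVec, one_mulVec, dotProduct_add, ← mulVec_mulVec, hxw]
        ring
      have : star x ⬝ᵥ C *ᵥ x = x ⬝ᵥ C *ᵥ x := by simp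
      rw [this, hgoal]
      exact hpos
  have hCpsd := hCpd.posSemidef
  set R := hCpsd.sqrt with hRdef
  have hRR : R * R = C := hCpsd.sqrt_mul_self
  have hRpsd : R.PosSemidef := hCpsd.posSemidef_sqrt
  have hRt : Rᵀ = R := by
    rw [← conjTranspose_eq_transpose_of_trivial]; exact hRpsd.1
  set K := S * Om n * S with hKdef
  have hKt : Kᵀ = -K := by
    rw [hKdef]
    simp only [transpose_mul, hSsym, hΩt, Matrix.neg_mul, Matrix.mul_neg, Matrix.mul_assoc]
  have hKT : K * T = -1 := by
    rw [hKdef, hTdef]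
    have h : S * Om n * S * (S⁻¹ * Om n * S⁻¹)
        = S * (Om n * ((S * S⁻¹) * (Om n * S⁻¹))) := by simp only [Matrix.mul_assoc]
    rw [h, hS1, Matrix.one_mul, ← Matrix.mul_assoc (Om n), hΩ2]
    simp only [Matrix.neg_mul, Matrix.mul_neg, Matrix.one_mul, hS1]
  have hTK : T * K = -1 := by
    rw [hKdef, hTdef]
    have h : S⁻¹ * Om n * S⁻¹ * (S * Om n * S)
        = S⁻¹ * (Om n * ((S⁻¹ * S) * (Om n * S))) := by simp only [Matrix.mul_assoc]
    rw [h, hS2, Matrix.one_mul, ← Matrix.mul_assoc (Om n), hΩ2]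
    simp only [Matrix.neg_mul, Matrix.mul_neg, Matrix.one_mul, hS2]
  have hKinv1 : K * (-T) = 1 := by rw [Matrix.mul_neg, hKT, neg_neg]
  have hKinv2 : (-T) * K = 1 := by rw [Matrix.neg_mul, hTK, neg_neg]
  have hTTKK : (T * T) * (K * K) = 1 := by
    have h : (T * T) * (K * K) = T * ((T * K) * K) := by simp only [Matrix.mul_assoc]
    rw [h, hTK]
    simp only [Matrix.neg_mul, Matrix.one_mul, Matrix.mul_neg, hTK, neg_neg]
  have hKKTT : (K * K) * (T * T) = 1 := by
    have h : (K * K) * (T * T) = K * ((K * T) * T) := by simp only [Matrix.mul_assoc]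
    rw [h, hKT]
    simp only [Matrix.neg_mul, Matrix.one_mul, Matrix.mul_neg, hKT, neg_neg]
  have hTTC : T * T = C - 1 := by rw [hCdef]; abel
  -- commutation helper
  have comm_of_inv : ∀ (X Y Z : Matrix (Fin n ⊕ Fin n) (Fin n ⊕ Fin n) ℝ),
      X * Y = 1 → Y * X = 1 → Z * X = X * Z → Z * Y = Y * Z := by
    intro X Y Z h1 h2 h3
    calc Z * Y = (Y * X) * (Z * Y) := by rw [h2, Matrix.one_mul]
      _ = Y * ((X * Z) * Y) := by simp only [Matrix.mul_assoc]
      _ = Y * ((Z * X) * Y) := by rw [← h3]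
      _ = Y * (Z * (X * Y)) := by simp only [Matrix.mul_assoc]
      _ = Y * Z := by rw [h1, Matrix.mul_one]
  have hRC : R * C = C * R := by
    rw [← hRR]; simp only [Matrix.mul_assoc]
  have hRTT : R * (T * T) = (T * T) * R := by
    rw [hTTC, Matrix.mul_sub, Matrix.sub_mul, hRC, Matrix.mul_one, Matrix.one_mul]
  have hRKK : R * (K * K) = (K * K) * R :=
    comm_of_inv (T * T) (K * K) R hTTKK hKKTT hRTT
  set Q := hRpsd.sqrt with hQdef
  have hQQ : Q * Q = R := hRpsd.sqrt_mul_self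
  have hQpsd : Q.PosSemidef := hRpsd.posSemidef_sqrt
  have hQt : Qᵀ = Q := by
    rw [← conjTranspose_eq_transpose_of_trivial]; exact hQpsd.1
  have hQR : Q * R = R * Q := by rw [← hQQ]; simp only [Matrix.mul_assoc]
  have hQC : Q * C = C * Q := by
    rw [← hRR]
    calc Q * (R * R) = (Q * R) * R := by simp only [Matrix.mul_assoc]
      _ = (R * Q) * R := by rw [hQR]
      _ = R * (Q * R) := by simp only [Matrix.mul_assoc]
      _ = R * (R * Q) := by rw [hQR]
      _ = (R * R) * Q := by simp only [Matrix.mul_assoc]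
  have hQTT : Q * (T * T) = (T * T) * Q := by
    rw [hTTC, Matrix.mul_sub, Matrix.sub_mul, hQC, Matrix.mul_one, Matrix.one_mul]
  have hQKK : Q * (K * K) = (K * K) * Q :=
    comm_of_inv (T * T) (K * K) Q hTTKK hKKTT hQTT
  have rcancel : ∀ A B : Matrix (Fin n ⊕ Fin n) (Fin n ⊕ Fin n) ℝ,
      A * K = B * K → A = B := by
    intro A B h
    have h2 : A * (K * (-T)) = B * (K * (-T)) := by
      rw [← Matrix.mul_assoc A K (-T), ← Matrix.mul_assoc B K (-T), h]
    rwa [hKinv1, Matrix.mul_one, Matrix.mul_one] at h2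
  set P := (-T) * Q * K with hPdef
  have hPt : Pᵀ = P := by
    rw [hPdef, transpose_mul ((-T) * Q) K, transpose_mul (-T) Q, hKt, hQt, transpose_neg,
      hTt, neg_neg]
    -- goal : -K * (Q * T) = -T * Q * K
    apply rcancel
    have hL : (-K) * (Q * T) * K = -(K * Q * (T * K)) := by
      simp only [Matrix.neg_mul, Matrix.mul_assoc]
    have hR' : (-T) * Q * K * K = -(T * (Q * (K * K))) := by
      simp only [Matrix.neg_mul, Matrix.mul_assoc]
    rw [hL, hR', hTK]
    rw [show Q * (K * K) = (K * K) * Q from hQKK]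
    have : T * ((K * K) * Q) = (T * K) * (K * Q) := by simp only [Matrix.mul_assoc]
    rw [this, hTK]
    simp only [Matrix.mul_neg, Matrix.neg_mul, Matrix.one_mul, Matrix.mul_one, neg_neg]
  have hPP : P * P = (-T) * R * K := by
    rw [hPdef]
    have h : (-T) * Q * K * ((-T) * Q * K) = (-T) * (Q * ((K * (-T)) * (Q * K))) := by
      simp only [Matrix.mul_assoc]
    rw [h, hKinv1, Matrix.one_mul, ← hQQ]
    simp only [Matrix.mul_assoc]
  have hN'psd : ((-T) * R * K).PosSemidef := by
    rw [← hPP]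
    have hPH : Pᴴ = P := by rw [conjTranspose_eq_transpose_of_trivial, hPt]
    have := Matrix.posSemidef_conjTranspose_mul_self P
    rwa [hPH] at this
  have hKC : K * C = C * K := by
    have h3 : K * (T * T) = (T * T) * K := by
      rw [← Matrix.mul_assoc K T T, hKT, Matrix.mul_assoc T T K, hTK]
      simp only [Matrix.neg_mul, Matrix.mul_neg, Matrix.one_mul, Matrix.mul_one]
    rw [hCdef, Matrix.mul_add, Matrix.add_mul, Matrix.mul_one, Matrix.one_mul, h3]
  have hN'sq : ((-T) * R * K) ^ 2 = C := by
    rw [pow_two]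
    have h : (-T) * R * K * ((-T) * R * K) = (-T) * (R * ((K * (-T)) * (R * K))) := by
      simp only [Matrix.mul_assoc]
    rw [h, hKinv1, Matrix.one_mul]
    have h2 : (-T) * (R * (R * K)) = (-T) * ((R * R) * K) := by simp only [Matrix.mul_assoc]
    rw [h2, hRR, ← hKC, ← Matrix.mul_assoc (-T) K C, hKinv2, Matrix.one_mul]
  have hN'eq : (-T) * R * K = R := (hN'psd.eq_sqrt_of_sq_eq hCpsd hN'sq).trans hRdef.symm
  have hRK : R * K = K * R := by
    calc R * K = (K * (-T)) * (R * K) := by rw [hKinv1, Matrix.one_mul]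
      _ = K * ((-T) * R * K) := by simp only [Matrix.mul_assoc]
      _ = K * R := by rw [hN'eq]
  -- the witness
  have hVinv : S⁻¹ * S⁻¹ = V⁻¹ := by rw [← hSS, Matrix.mul_inv_rev]
  have hVΩinv : (V * Om n)⁻¹ = -(Om n) * V⁻¹ := by
    apply Matrix.inv_eq_right_inv
    have h : V * Om n * (-(Om n) * V⁻¹) = V * ((Om n * Om n) * -V⁻¹) := by
      simp only [Matrix.mul_neg, Matrix.neg_mul, Matrix.mul_assoc]
    rw [h, hΩ2]
    simp only [Matrix.neg_mul, Matrix.one_mul, neg_neg]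
    exact Matrix.mul_nonsing_inv V ((Matrix.isUnit_iff_isUnit_det V).mp hVpdR.isUnit)
  refine ⟨S * R * S⁻¹, ?_, ?_, ?_⟩
  · -- square identity
    have h1 : S * R * S⁻¹ * (S * R * S⁻¹) = S * ((R * R) * S⁻¹) := by
      calc S * R * S⁻¹ * (S * R * S⁻¹) = S * (R * (S⁻¹ * (S * (R * S⁻¹)))) := by
            simp only [Matrix.mul_assoc]
        _ = S * (R * (R * S⁻¹)) := by rw [hSc2]
        _ = S * ((R * R) * S⁻¹) := by simp only [Matrix.mul_assoc]
    have hVc : ∀ X : Matrix (Fin n ⊕ Fin n) (Fin n ⊕ Fin n) ℝ,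
        S⁻¹ * (S⁻¹ * X) = V⁻¹ * X := fun X => by
      rw [← Matrix.mul_assoc S⁻¹ S⁻¹ X, hVinv]
    rw [h1, hRR, hCdef, hVΩinv]
    rw [Matrix.add_mul, Matrix.one_mul, Matrix.mul_add, hS1]
    have h4 : S * (T * T * S⁻¹) = -(Om n) * V⁻¹ * (-(Om n) * V⁻¹) := by
      rw [hTdef]
      simp only [Matrix.neg_mul, Matrix.mul_neg, neg_neg, Matrix.mul_assoc]
      rw [hSc1, hVc, hVinv]
    rw [pow_two, h4]
  · -- commutation
    have hVΩ : V * Om n = S * K * S⁻¹ := by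
      rw [hKdef, ← hSS]
      calc S * S * Om n = S * (S * Om n * (S * S⁻¹)) := by
            rw [hS1, Matrix.mul_one]; simp only [Matrix.mul_assoc]
        _ = S * (S * Om n * S) * S⁻¹ := by simp only [Matrix.mul_assoc]
    rw [hVΩ]
    calc S * R * S⁻¹ * (S * K * S⁻¹) = S * ((R * K) * S⁻¹) := by
          calc S * R * S⁻¹ * (S * K * S⁻¹) = S * (R * (S⁻¹ * (S * (K * S⁻¹)))) := by
                simp only [Matrix.mul_assoc]
            _ = S * (R * (K * S⁻¹)) := by rw [hSc2]
            _ = S * ((R * K) * S⁻¹) := by simp only [Matrix.mul_assoc]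
      _ = S * ((K * R) * S⁻¹) := by rw [hRK]
      _ = S * K * S⁻¹ * (S * R * S⁻¹) := by
          calc S * ((K * R) * S⁻¹) = S * (K * (R * S⁻¹)) := by simp only [Matrix.mul_assoc]
            _ = S * (K * (S⁻¹ * (S * (R * S⁻¹)))) := by rw [hSc2]
            _ = S * K * S⁻¹ * (S * R * S⁻¹) := by simp only [Matrix.mul_assoc]
  · -- eigenvalues
    intro μ hroot
    obtain ⟨v, hv, hmul⟩ := PSA.exists_eigenvector hroot
    have hRpd : R.PosDef := by
      refine Matrix.PosDef.of_dotProduct_mulVec_pos hRpsd.1 fun x hx => ?_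
      rcases (hRpsd.dotProduct_mulVec_nonneg x).lt_or_eq with h | h
      · exact h
      · exfalso
        have hRx : R *ᵥ x = 0 := (hRpsd.dotProduct_mulVec_zero_iff x).mp h.symm
        have hCx : C *ᵥ x = 0 := by rw [← hRR, ← mulVec_mulVec, hRx, mulVec_zero]
        have hcp := hCpd.dotProduct_mulVec_pos hx
        rw [hCx, dotProduct_zero] at hcp
        exact lt_irrefl 0 hcp
    have hRcpd : (cm R).PosDef := PSA.cm_posDef hRpd
    have hcmM : cm (S * R * S⁻¹) = cm S * cm R * cm S⁻¹ := by
      rw [PSA.cm_mul, PSA.cm_mul]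
    have hwne : cm S⁻¹ *ᵥ v ≠ 0 := by
      intro h0
      apply hv
      have h1 : (cm S * cm S⁻¹) *ᵥ v = v := by rw [hcmS1, one_mulVec]
      rw [← h1, ← mulVec_mulVec, h0, mulVec_zero]
    have hRw : cm R *ᵥ (cm S⁻¹ *ᵥ v) = μ • (cm S⁻¹ *ᵥ v) := by
      have h2 := congrArg (fun t => cm S⁻¹ *ᵥ t) hmul
      simp only [hcmM] at h2
      rw [mulVec_mulVec, mulVec_smul] at h2
      calc cm R *ᵥ (cm S⁻¹ *ᵥ v) = ((cm R * cm S⁻¹) * 1) *ᵥ v := by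
            rw [Matrix.mul_one, ← mulVec_mulVec]
        _ = (cm S⁻¹ * (cm S * cm R * cm S⁻¹)) *ᵥ v := by
            rw [show cm S⁻¹ * (cm S * cm R * cm S⁻¹)
                = (cm S⁻¹ * cm S) * (cm R * cm S⁻¹) by simp only [Matrix.mul_assoc],
              hcmS2, Matrix.one_mul, Matrix.mul_one]
        _ = μ • (cm S⁻¹ *ᵥ v) := h2
    set w := cm S⁻¹ *ᵥ v with hw
    have hpos := hRcpd.dotProduct_mulVec_pos hwne
    rw [hRw, dotProduct_smul] at hpos
    have hsw : star w ⬝ᵥ w = ((∑ i, Complex.normSq (w i) : ℝ) : ℂ) := by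
      push_cast
      simp only [dotProduct, Pi.star_apply]
      refine Finset.sum_congr rfl fun i _ => ?_
      rw [Complex.star_def, mul_comm, Complex.mul_conj]
    have ht : 0 < ∑ i, Complex.normSq (w i) := by
      have hex : ∃ i, w i ≠ 0 := by
        by_contra hall
        push_neg at hall
        exact hwne (funext hall)
      obtain ⟨i, hi⟩ := hex
      exact Finset.sum_pos' (fun j _ => Complex.normSq_nonneg _)
        ⟨i, Finset.mem_univ i, Complex.normSq_pos.mpr hi⟩
    rw [hsw, smul_eq_mul] at hpos
    rw [Complex.lt_def] at hpos
    obtain ⟨hre, him⟩ := hpos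
    simp only [Complex.zero_re, Complex.zero_im, Complex.mul_re, Complex.mul_im,
      Complex.ofReal_re, Complex.ofReal_im, mul_zero, zero_mul, add_zero, zero_add,
      sub_zero] at hre him
    constructor
    · have : μ.im * (∑ i, Complex.normSq (w i)) = 0 := him.symm
      rcases mul_eq_zero.mp this with h | h
      · exact h
      · exact absurd h ht.ne'
    · nlinarith [hre, ht]
end
end
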